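/- The integral over the real line of Φ(u)·Φ(−u) du equals 1/√π, where Φ is the standard normal CDF. -/

import Mathlib

open MeasureTheory Real

/-- Standard normal CDF. -/
noncomputable def stdNormalCDF (u : ℝ) : ℝ :=
  ∫ t in Set.Iic u, (Real.sqrt (2 * Real.pi))⁻¹ * Real.exp (-t ^ 2 / 2)

open Filter Set Topology

noncomputable def gpdf (t : ℝ) : ℝ := (Real.sqrt (2 * Real.pi))⁻¹ * Real.exp (-t ^ 2 / 2)

lemma cdf_eq (u : ℝ) : stdNormalCDF u = ∫ t in Set.Iic u, gpdf t := rfl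

lemma gpdf_pos (t : ℝ) : 0 < gpdf t := by unfold gpdf; positivity

lemma exp_form : (fun t : ℝ => Real.exp (-t ^ 2 / 2)) = fun t => Real.exp (-(1/2 : ℝ) * t ^ 2) := by
  ext t; congr 1; ring

lemma integrable_exp_half : Integrable (fun t : ℝ => Real.exp (-t ^ 2 / 2)) := by
  rw [exp_form]; exact integrable_exp_neg_mul_sq (by norm_num)

lemma gpdf_integrable : Integrable gpdf := by
  unfold gpdf; exact integrable_exp_half.const_mul _

lemma gpdf_continuous : Continuous gpdf := by unfold gpdf; continuity

lemma integral_gpdf : ∫ t, gpdf t = 1 := by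
  unfold gpdf
  rw [integral_const_mul, exp_form, integral_gaussian, ← Real.sqrt_inv,
    ← Real.sqrt_mul (by positivity),
    show (2*Real.pi)⁻¹ * (Real.pi/(1/2)) = 1 by field_simp]
  exact Real.sqrt_one

lemma cdf_nonneg (u : ℝ) : 0 ≤ stdNormalCDF u := by
  rw [cdf_eq]
  exact setIntegral_nonneg measurableSet_Iic fun t _ => (gpdf_pos t).le

lemma gpdf_even (t : ℝ) : gpdf (-t) = gpdf t := by unfold gpdf; ring_nf

lemma cdf_neg (u : ℝ) : stdNormalCDF (-u) = 1 - stdNormalCDF u := by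
  have h1 : stdNormalCDF (-u) = ∫ t in Set.Ioi u, gpdf t := by
    rw [cdf_eq]
    have : ∫ t in Set.Iic (-u), gpdf t = ∫ t in Set.Iic (-u), gpdf (-t) := by
      simp [gpdf_even]
    rw [this, integral_comp_neg_Iic, neg_neg]
  have h2 : stdNormalCDF u + stdNormalCDF (-u) = 1 := by
    rw [cdf_eq, h1, ← integral_gpdf]
    rw [← setIntegral_union (Set.Iic_disjoint_Ioi le_rfl) measurableSet_Ioi
      gpdf_integrable.integrableOn gpdf_integrable.integrableOn, Set.Iic_union_Ioi,
      setIntegral_univ]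
  linarith

lemma cdf_le_one (u : ℝ) : stdNormalCDF u ≤ 1 := by
  have := cdf_nonneg (-u); rw [cdf_neg] at this; linarith

lemma cdf_hasDerivAt (u : ℝ) : HasDerivAt stdNormalCDF (gpdf u) u := by
  have heq : stdNormalCDF = fun v => stdNormalCDF 0 + ∫ t in (0:ℝ)..v, gpdf t := by
    ext v
    rw [cdf_eq, cdf_eq, ← intervalIntegral.integral_Iic_sub_Iic gpdf_integrable.integrableOn
      gpdf_integrable.integrableOn]
    ring
  rw [heq]
  exact HasDerivAt.const_add (stdNormalCDF 0)
    (intervalIntegral.integral_hasDerivAt_right (gpdf_integrable.intervalIntegrable)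
      (gpdf_continuous.stronglyMeasurable.stronglyMeasurableAtFilter)
      gpdf_continuous.continuousAt)

lemma exp_half_hasDerivAt (u : ℝ) :
    HasDerivAt (fun t : ℝ => Real.exp (-t ^ 2 / 2)) (-u * Real.exp (-u ^ 2 / 2)) u := by
  have h1 : HasDerivAt (fun t : ℝ => -t ^ 2 / 2) (-u) u := by
    have := ((hasDerivAt_pow 2 u).neg).div_const 2
    simpa using this.congr_deriv (by ring)
  simpa [mul_comm] using h1.exp

lemma integrable_mul_exp_half : Integrable (fun t : ℝ => t * Real.exp (-t ^ 2 / 2)) := by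
  have : (fun t : ℝ => t * Real.exp (-t ^ 2 / 2))
      = fun t => t * Real.exp (-(1/2 : ℝ) * t ^ 2) := by ext t; congr 1; ring_nf
  rw [this]; exact integrable_mul_exp_neg_mul_sq (by norm_num)

lemma exp_half_tendsto_atBot : Tendsto (fun t : ℝ => Real.exp (-t ^ 2 / 2)) atBot (𝓝 0) := by
  apply Real.tendsto_exp_atBot.comp
  have h : Tendsto (fun t : ℝ => t ^ 2) atBot atTop := by
    have h0 : Tendsto (fun t : ℝ => t ^ 2) atTop atTop := tendsto_pow_atTop two_ne_zero
    have := h0.comp tendsto_neg_atBot_atTop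
    apply this.congr
    intro t
    simp [Function.comp]
  have h2 : Tendsto (fun t : ℝ => t ^ 2 / 2) atBot atTop := h.atTop_div_const (by norm_num)
  have := tendsto_neg_atTop_atBot.comp h2
  apply this.congr
  intro t; simp [Function.comp, neg_div]

lemma exp_half_tendsto_atTop : Tendsto (fun t : ℝ => Real.exp (-t ^ 2 / 2)) atTop (𝓝 0) := by
  apply Real.tendsto_exp_atBot.comp
  have h : Tendsto (fun t : ℝ => t ^ 2) atTop atTop := tendsto_pow_atTop two_ne_zero
  have h2 : Tendsto (fun t : ℝ => t ^ 2 / 2) atTop atTop := h.atTop_div_const (by norm_num)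
  have := tendsto_neg_atTop_atBot.comp h2
  apply this.congr
  intro t; simp [Function.comp, neg_div]

lemma integral_Iic_mul_exp (u : ℝ) :
    ∫ t in Set.Iic u, t * Real.exp (-t ^ 2 / 2) = -Real.exp (-u ^ 2 / 2) := by
  have := integral_Iic_of_hasDerivAt_of_tendsto
    (f := fun t : ℝ => -Real.exp (-t ^ 2 / 2)) (f' := fun t => t * Real.exp (-t ^ 2 / 2))
    (a := u) (m := 0)
    (by exact ((exp_half_hasDerivAt u).neg.continuousAt).continuousWithinAt)
    (fun x _ => by simpa using (exp_half_hasDerivAt x).fun_neg.congr_deriv (by ring))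
    integrable_mul_exp_half.integrableOn
    (by simpa using exp_half_tendsto_atBot.neg)
  simpa using this

lemma cdf_tail {u : ℝ} (hu : u < 0) : stdNormalCDF u ≤ gpdf u / (-u) := by
  set c : ℝ := (Real.sqrt (2 * Real.pi))⁻¹ with hc
  have hc0 : 0 < c := by rw [hc]; positivity
  have h1 : stdNormalCDF u ≤ ∫ t in Set.Iic u, (c / u) * (t * Real.exp (-t ^ 2 / 2)) := by
    rw [cdf_eq]
    apply setIntegral_mono_on gpdf_integrable.integrableOn
      ((integrable_mul_exp_half.const_mul (c / u)).integrableOn) measurableSet_Iic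
    intro t ht
    have ht' : t ≤ u := ht
    have h2 : (1 : ℝ) ≤ t / u := by
      rw [le_div_iff_of_neg hu]; linarith
    have hE : 0 < Real.exp (-t ^ 2 / 2) := Real.exp_pos _
    calc gpdf t = 1 * (c * Real.exp (-t ^ 2 / 2)) := by rw [gpdf]; ring
      _ ≤ (t / u) * (c * Real.exp (-t ^ 2 / 2)) :=
          mul_le_mul_of_nonneg_right h2 (by positivity)
      _ = (c / u) * (t * Real.exp (-t ^ 2 / 2)) := by ring
  rw [integral_const_mul, integral_Iic_mul_exp] at h1
  calc stdNormalCDF u ≤ c / u * -Real.exp (-u ^ 2 / 2) := h1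
    _ = gpdf u / (-u) := by rw [gpdf, div_neg]; ring

lemma gpdf_tendsto_atBot : Tendsto gpdf atBot (𝓝 0) := by
  have := exp_half_tendsto_atBot.const_mul (Real.sqrt (2 * Real.pi))⁻¹
  unfold gpdf
  simpa only [gpdf, mul_zero] using this

lemma gpdf_tendsto_atTop : Tendsto gpdf atTop (𝓝 0) := by
  have := exp_half_tendsto_atTop.const_mul (Real.sqrt (2 * Real.pi))⁻¹
  unfold gpdf
  simpa only [gpdf, mul_zero] using this

lemma cdf_tendsto_atTop : Tendsto stdNormalCDF atTop (𝓝 1) := by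
  have h := (aecover_Iic (tendsto_id (α := ℝ) (x := atTop))).integral_tendsto_of_countably_generated
    gpdf_integrable
  rw [integral_gpdf] at h
  exact h.congr fun u => (cdf_eq u).symm

lemma cdf_tendsto_atBot : Tendsto stdNormalCDF atBot (𝓝 0) := by
  have h := cdf_tendsto_atTop.comp tendsto_neg_atBot_atTop
  have h2 : Tendsto (fun u : ℝ => 1 - stdNormalCDF (-u)) atBot (𝓝 (1 - 1)) :=
    tendsto_const_nhds.sub h
  simp only [sub_self] at h2
  apply h2.congr
  intro u
  have := cdf_neg u
  linarith

lemma cdf_tail' {u : ℝ} (hu : 0 < u) : 1 - stdNormalCDF u ≤ gpdf u / u := by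
  have h := cdf_tail (u := -u) (by linarith)
  rw [cdf_neg] at h
  simpa [gpdf, neg_neg, neg_pow] using h

-- u * cdf u → 0 at -∞
lemma mul_cdf_tendsto_atBot : Tendsto (fun u : ℝ => u * stdNormalCDF u) atBot (𝓝 0) := by
  apply squeeze_zero_norm' (a := gpdf)
  · filter_upwards [eventually_lt_atBot (0 : ℝ)] with u hu
    have h := cdf_tail hu
    have h0 := cdf_nonneg u
    rw [Real.norm_eq_abs, abs_mul, abs_of_neg hu, abs_of_nonneg h0]
    calc -u * stdNormalCDF u ≤ -u * (gpdf u / (-u)) :=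
          mul_le_mul_of_nonneg_left h (by linarith)
      _ = gpdf u := by field_simp [hu.ne]
  · exact gpdf_tendsto_atBot

lemma mul_cdf_tendsto_atTop : Tendsto (fun u : ℝ => u * (1 - stdNormalCDF u)) atTop (𝓝 0) := by
  apply squeeze_zero_norm' (a := gpdf)
  · filter_upwards [eventually_gt_atTop (0 : ℝ)] with u hu
    have h := cdf_tail' hu
    have h1 := cdf_le_one u
    rw [Real.norm_eq_abs, abs_mul, abs_of_pos hu, abs_of_nonneg (by linarith)]
    calc u * (1 - stdNormalCDF u) ≤ u * (gpdf u / u) :=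
          mul_le_mul_of_nonneg_left h (by linarith)
      _ = gpdf u := by field_simp [hu.ne']
  · exact gpdf_tendsto_atTop

noncomputable def Tfun (u : ℝ) : ℝ := ∫ t in (0:ℝ)..u, Real.exp (-t ^ 2)

lemma integrable_exp_sq : Integrable (fun t : ℝ => Real.exp (-t ^ 2)) := by
  have : (fun t : ℝ => Real.exp (-t ^ 2)) = fun t => Real.exp (-(1:ℝ) * t ^ 2) := by
    ext t; congr 1; ring
  rw [this]; exact integrable_exp_neg_mul_sq one_pos

lemma Tfun_hasDerivAt (u : ℝ) : HasDerivAt Tfun (Real.exp (-u ^ 2)) u :=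
  intervalIntegral.integral_hasDerivAt_right integrable_exp_sq.intervalIntegrable
    ((Real.continuous_exp.comp (by continuity)).stronglyMeasurable.stronglyMeasurableAtFilter)
    (Real.continuous_exp.comp (by continuity)).continuousAt

lemma Tfun_tendsto_atTop : Tendsto Tfun atTop (𝓝 (Real.sqrt Real.pi / 2)) := by
  have h := intervalIntegral_tendsto_integral_Ioi 0 integrable_exp_sq.integrableOn
    (tendsto_id (α := ℝ) (x := atTop))
  have h2 : ∫ t in Set.Ioi (0:ℝ), Real.exp (-t ^ 2) = Real.sqrt Real.pi / 2 := by
    have : (fun t : ℝ => Real.exp (-t ^ 2)) = fun t => Real.exp (-(1:ℝ) * t ^ 2) := by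
      ext t; congr 1; ring
    rw [this, integral_gaussian_Ioi]
    norm_num
  rw [h2] at h
  exact h

lemma Tfun_tendsto_atBot : Tendsto Tfun atBot (𝓝 (-(Real.sqrt Real.pi / 2))) := by
  have h := intervalIntegral_tendsto_integral_Iic 0 integrable_exp_sq.integrableOn
    (tendsto_id (α := ℝ) (x := atBot))
  have h2 : ∫ t in Set.Iic (0:ℝ), Real.exp (-t ^ 2) = Real.sqrt Real.pi / 2 := by
    have heven : ∫ t in Set.Iic (0:ℝ), Real.exp (-t ^ 2)
        = ∫ t in Set.Ioi (0:ℝ), Real.exp (-t ^ 2) := by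
      have : ∫ t in Set.Iic (0:ℝ), Real.exp (-t ^ 2)
          = ∫ t in Set.Iic (0:ℝ), Real.exp (-(-t) ^ 2) := by
        apply setIntegral_congr_fun measurableSet_Iic
        intro t _; simp [neg_pow]
      rw [this, integral_comp_neg_Iic 0 (fun t => Real.exp (-t ^ 2)), neg_zero]
    rw [heven]
    have : (fun t : ℝ => Real.exp (-t ^ 2)) = fun t => Real.exp (-(1:ℝ) * t ^ 2) := by
      ext t; congr 1; ring
    rw [this, integral_gaussian_Ioi]
    norm_num
  rw [h2] at h
  have : Tendsto (fun a : ℝ => -∫ t in a..(0:ℝ), Real.exp (-t ^ 2)) atBot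
      (𝓝 (-(Real.sqrt Real.pi / 2))) := h.neg
  apply this.congr
  intro a
  rw [Tfun, ← intervalIntegral.integral_symm]

lemma cdf_continuous : Continuous stdNormalCDF :=
  continuous_iff_continuousAt.mpr fun u => (cdf_hasDerivAt u).continuousAt

lemma gpdf_hasDerivAt (u : ℝ) : HasDerivAt gpdf (-u * gpdf u) u := by
  have := (exp_half_hasDerivAt u).const_mul (Real.sqrt (2 * Real.pi))⁻¹
  unfold gpdf
  exact this.congr_deriv (by ring)

lemma gpdf_le (t : ℝ) : gpdf t ≤ Real.exp (-t ^ 2 / 2) := by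
  rw [gpdf]
  have h1 : (1:ℝ) ≤ Real.sqrt (2 * Real.pi) := by
    rw [show (1:ℝ) = Real.sqrt 1 by simp]
    apply Real.sqrt_le_sqrt
    nlinarith [Real.pi_gt_three]
  have h2 : (Real.sqrt (2 * Real.pi))⁻¹ ≤ 1 := by
    rw [inv_eq_one_div]
    exact div_le_one_of_le₀ h1 (by positivity)
  nlinarith [Real.exp_pos (-t ^ 2 / 2),
    (inv_pos.mpr (lt_of_lt_of_le one_pos h1) : (0:ℝ) < (Real.sqrt (2 * Real.pi))⁻¹)]

lemma integrand_integrable : Integrable (fun u : ℝ => stdNormalCDF u * (1 - stdNormalCDF u)) := by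
  apply Integrable.mono' (g := fun u : ℝ => Real.exp (1/2) * Real.exp (-u ^ 2 / 2))
    (integrable_exp_half.const_mul _)
    ((cdf_continuous.mul (continuous_const.sub cdf_continuous)).aestronglyMeasurable)
  apply Filter.Eventually.of_forall
  intro u
  have h0 := cdf_nonneg u
  have h1 := cdf_le_one u
  have hE : (0:ℝ) < Real.exp (-u ^ 2 / 2) := Real.exp_pos _
  have he : (1:ℝ) ≤ Real.exp (1/2) := by
    rw [show (1:ℝ) = Real.exp 0 by simp]
    exact Real.exp_le_exp.mpr (by norm_num)
  show ‖stdNormalCDF u * (1 - stdNormalCDF u)‖ ≤ _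
  rw [Real.norm_eq_abs, abs_of_nonneg (by nlinarith)]
  rcases le_or_gt u (-1) with hu | hu
  · have ht := cdf_tail (u := u) (by linarith)
    have hg := gpdf_le u
    have : stdNormalCDF u ≤ gpdf u := by
      calc stdNormalCDF u ≤ gpdf u / (-u) := ht
        _ ≤ gpdf u := by
            rw [div_le_iff₀ (by linarith : (0:ℝ) < -u)]
            nlinarith [gpdf_pos u]
    nlinarith
  rcases le_or_gt 1 u with hu' | hu'
  · have ht := cdf_tail' (u := u) (by linarith)
    have hg := gpdf_le u
    have : 1 - stdNormalCDF u ≤ gpdf u := by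
      calc 1 - stdNormalCDF u ≤ gpdf u / u := ht
        _ ≤ gpdf u := by
            rw [div_le_iff₀ (by linarith : (0:ℝ) < u)]
            nlinarith [gpdf_pos u]
    nlinarith
  · -- |u| < 1
    have hu2 : u ^ 2 ≤ 1 := by nlinarith
    have hE2 : Real.exp (-(1:ℝ)/2) ≤ Real.exp (-u ^ 2 / 2) :=
      Real.exp_le_exp.mpr (by linarith)
    have : (1:ℝ) ≤ Real.exp (1/2) * Real.exp (-u ^ 2 / 2) := by
      calc (1:ℝ) = Real.exp (1/2) * Real.exp (-(1:ℝ)/2) := by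
            rw [← Real.exp_add]; norm_num
        _ ≤ Real.exp (1/2) * Real.exp (-u ^ 2 / 2) := by nlinarith [Real.exp_pos (1/2:ℝ)]
    nlinarith

theorem integral_cdf_mul_cdf_neg :
    ∫ u : ℝ, stdNormalCDF u * stdNormalCDF (-u) = 1 / Real.sqrt Real.pi := by
  have hrw : (fun u : ℝ => stdNormalCDF u * stdNormalCDF (-u))
      = fun u => stdNormalCDF u * (1 - stdNormalCDF u) := by
    ext u; rw [cdf_neg]
  rw [hrw]
  set c : ℝ := (Real.sqrt (2 * Real.pi))⁻¹ with hc
  set F : ℝ → ℝ := fun u => u * stdNormalCDF u * (1 - stdNormalCDF u)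
      + gpdf u * (1 - 2 * stdNormalCDF u) + 2 * c ^ 2 * Tfun u with hF
  have hderiv : ∀ u, HasDerivAt F (stdNormalCDF u * (1 - stdNormalCDF u)) u := by
    intro u
    have h1 : HasDerivAt (fun u : ℝ => u * stdNormalCDF u * (1 - stdNormalCDF u))
        ((1 * stdNormalCDF u + u * gpdf u) * (1 - stdNormalCDF u)
          + u * stdNormalCDF u * (0 - gpdf u)) u :=
      (((hasDerivAt_id u).mul (cdf_hasDerivAt u)).mul
        ((hasDerivAt_const u (1:ℝ)).sub (cdf_hasDerivAt u)))
    have h2 : HasDerivAt (fun u : ℝ => gpdf u * (1 - 2 * stdNormalCDF u))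
        ((-u * gpdf u) * (1 - 2 * stdNormalCDF u) + gpdf u * (0 - 2 * gpdf u)) u :=
      ((gpdf_hasDerivAt u).mul
        ((hasDerivAt_const u (1:ℝ)).sub ((cdf_hasDerivAt u).const_mul 2)))
    have h3 : HasDerivAt (fun u : ℝ => 2 * c ^ 2 * Tfun u)
        (2 * c ^ 2 * Real.exp (-u ^ 2)) u := (Tfun_hasDerivAt u).const_mul _
    have := (h1.add h2).add h3
    refine this.congr_deriv ?_
    have hgg : gpdf u = c * Real.exp (-u ^ 2 / 2) := rfl
    have hEE : Real.exp (-u ^ 2) = Real.exp (-u ^ 2 / 2) * Real.exp (-u ^ 2 / 2) := by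
      rw [← Real.exp_add]; congr 1; ring
    rw [hgg, hEE]
    ring
  have hbot : Tendsto F atBot (𝓝 (2 * c ^ 2 * -(Real.sqrt Real.pi / 2))) := by
    have hA : Tendsto (fun u : ℝ => u * stdNormalCDF u * (1 - stdNormalCDF u)
        + gpdf u * (1 - 2 * stdNormalCDF u)) atBot (𝓝 0) := by
      apply squeeze_zero_norm' (a := fun u => ‖u * stdNormalCDF u‖ + gpdf u)
      · apply Filter.Eventually.of_forall
        intro u
        have h0 := cdf_nonneg u
        have h1 := cdf_le_one u
        have hg := (gpdf_pos u).le
        calc ‖u * stdNormalCDF u * (1 - stdNormalCDF u) + gpdf u * (1 - 2 * stdNormalCDF u)‖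
            ≤ ‖u * stdNormalCDF u * (1 - stdNormalCDF u)‖ + ‖gpdf u * (1 - 2 * stdNormalCDF u)‖ :=
              norm_add_le _ _
          _ ≤ ‖u * stdNormalCDF u‖ + gpdf u := by
              rw [Real.norm_eq_abs, Real.norm_eq_abs, Real.norm_eq_abs]
              have e1 : |1 - stdNormalCDF u| ≤ 1 := by rw [abs_le]; constructor <;> linarith
              have e2 : |1 - 2 * stdNormalCDF u| ≤ 1 := by rw [abs_le]; constructor <;> linarith
              have e3 : |gpdf u| = gpdf u := abs_of_nonneg hg
              have e4 : |u * stdNormalCDF u * (1 - stdNormalCDF u)| ≤ |u * stdNormalCDF u| := by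
                rw [abs_mul]
                nlinarith [abs_nonneg (u * stdNormalCDF u)]
              have e5 : |gpdf u * (1 - 2 * stdNormalCDF u)| ≤ gpdf u := by
                rw [abs_mul, e3]; nlinarith
              linarith
      · have := (mul_cdf_tendsto_atBot.norm).add gpdf_tendsto_atBot
        simpa using this
    have := hA.add (Tfun_tendsto_atBot.const_mul (2 * c ^ 2))
    simpa using this
  have htop : Tendsto F atTop (𝓝 (2 * c ^ 2 * (Real.sqrt Real.pi / 2))) := by
    have hA : Tendsto (fun u : ℝ => u * stdNormalCDF u * (1 - stdNormalCDF u)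
        + gpdf u * (1 - 2 * stdNormalCDF u)) atTop (𝓝 0) := by
      apply squeeze_zero_norm' (a := fun u => ‖u * (1 - stdNormalCDF u)‖ + gpdf u)
      · apply Filter.Eventually.of_forall
        intro u
        have h0 := cdf_nonneg u
        have h1 := cdf_le_one u
        have hg := (gpdf_pos u).le
        calc ‖u * stdNormalCDF u * (1 - stdNormalCDF u) + gpdf u * (1 - 2 * stdNormalCDF u)‖
            ≤ ‖u * stdNormalCDF u * (1 - stdNormalCDF u)‖ + ‖gpdf u * (1 - 2 * stdNormalCDF u)‖ :=
              norm_add_le _ _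
          _ ≤ ‖u * (1 - stdNormalCDF u)‖ + gpdf u := by
              rw [Real.norm_eq_abs, Real.norm_eq_abs, Real.norm_eq_abs]
              have e2 : |1 - 2 * stdNormalCDF u| ≤ 1 := by rw [abs_le]; constructor <;> linarith
              have e3 : |gpdf u| = gpdf u := abs_of_nonneg hg
              have e4 : |u * stdNormalCDF u * (1 - stdNormalCDF u)| ≤ |u * (1 - stdNormalCDF u)| := by
                rw [show u * stdNormalCDF u * (1 - stdNormalCDF u)
                    = (u * (1 - stdNormalCDF u)) * stdNormalCDF u by ring, abs_mul]
                have : |stdNormalCDF u| ≤ 1 := by rw [abs_le]; constructor <;> linarith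
                nlinarith [abs_nonneg (u * (1 - stdNormalCDF u))]
              have e5 : |gpdf u * (1 - 2 * stdNormalCDF u)| ≤ gpdf u := by
                rw [abs_mul, e3]; nlinarith
              linarith
      · have := (mul_cdf_tendsto_atTop.norm).add gpdf_tendsto_atTop
        simpa using this
    have := hA.add (Tfun_tendsto_atTop.const_mul (2 * c ^ 2))
    simpa using this
  have key := integral_of_hasDerivAt_of_tendsto hderiv integrand_integrable hbot htop
  rw [key]
  have hc2 : c ^ 2 = (2 * Real.pi)⁻¹ := by
    rw [hc, ← Real.sqrt_inv, Real.sq_sqrt (by positivity)]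
  rw [hc2]
  have hs : Real.sqrt Real.pi * Real.sqrt Real.pi = Real.pi := Real.mul_self_sqrt Real.pi_pos.le
  have hs0 : (0:ℝ) < Real.sqrt Real.pi := Real.sqrt_pos.mpr Real.pi_pos
  field_simp
  nlinarith
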